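/- There exist operators A and B on L₂(ℝ^d) such that A has numerical range in a sector of angle π/3, B is bounded, invertible with B⁻¹ having numerical range in a sector of angle π/3, but −BA does not generate a C₀-semigroup. Concretely, with A = −e^{iπ/3}Δ and B multiplication by e^{iπ/3}, the operator −BA = e^{2iπ/3}Δ is not a generator of a C₀-semigroup on L₂(ℝ^d). -/

import Mathlib

open Real Complex

noncomputable section

/-- The closed sector `Σ(w) = {z ∈ ℂ* : |arg z| ≤ w}`. -/
def Sector (w : ℝ) : Set ℂ := {z : ℂ | z ≠ 0 ∧ |z.arg| ≤ w}

/-- A `C₀`-semigroup on `H`. -/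
def IsC0Semigroup {H : Type*} [NormedAddCommGroup H] [NormedSpace ℂ H]
    (T : ℝ → H →L[ℂ] H) : Prop :=
  T 0 = ContinuousLinearMap.id ℂ H ∧
  (∀ s t : ℝ, 0 ≤ s → 0 ≤ t → T (s + t) = (T s).comp (T t)) ∧
  (∀ x : H, Filter.Tendsto (fun t => T t x) (nhdsWithin 0 (Set.Ici 0)) (nhds x))

/-- Local uniform boundedness of a C₀-semigroup near `0`, via Banach–Steinhaus. -/
lemma c0_local_bound {H : Type*} [NormedAddCommGroup H] [NormedSpace ℂ H] [CompleteSpace H]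
    (T : ℝ → H →L[ℂ] H) (hT : IsC0Semigroup T) :
    ∃ δ > (0:ℝ), ∃ M : ℝ, 1 ≤ M ∧ ∀ t ∈ Set.Icc (0:ℝ) δ, ‖T t‖ ≤ M := by
  obtain ⟨hT0, hTadd, hTc⟩ := hT
  by_contra hcon
  push_neg at hcon
  have h : ∀ n : ℕ, ∃ t ∈ Set.Icc (0:ℝ) (1/((n:ℝ)+1)), ((n:ℝ)+1) < ‖T t‖ := by
    intro n
    obtain ⟨t, ht, hlt⟩ := hcon (1/((n:ℝ)+1)) (by positivity) ((n:ℝ)+1) (by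
      have : (0:ℝ) ≤ n := n.cast_nonneg; linarith)
    exact ⟨t, ht, hlt⟩
  choose t ht hlt using h
  have htend : Filter.Tendsto t Filter.atTop (nhdsWithin 0 (Set.Ici 0)) := by
    apply tendsto_nhdsWithin_of_tendsto_nhds_of_eventually_within
    · exact squeeze_zero (fun n => (ht n).1) (fun n => (ht n).2)
        tendsto_one_div_add_atTop_nhds_zero_nat
    · exact Filter.Eventually.of_forall fun n => (ht n).1
  have hb : ∀ x : H, ∃ C, ∀ n, ‖T (t n) x‖ ≤ C := by
    intro x
    have h2 : Filter.Tendsto (fun n => ‖T (t n) x‖) Filter.atTop (nhds ‖x‖) :=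
      ((hTc x).comp htend).norm
    obtain ⟨C, hC⟩ := h2.bddAbove_range
    exact ⟨C, fun n => hC (Set.mem_range_self n)⟩
  obtain ⟨C, hC⟩ := banach_steinhaus hb
  obtain ⟨n, hn⟩ := exists_nat_gt C
  have := hC n
  have := hlt n
  linarith

set_option maxHeartbeats 1000000 in
/-- One cannot remove the assumption `w₀ + w₁ < π/2`: with
`Δ` the (negative semi-definite, self-adjoint) Laplacian on `H = L₂(ℝ^d)` with domain
`H²(ℝ^d)` — abstractly, a symmetric operator with `(Δx,x) < 0` for `x ≠ 0` whose
approximate point spectrum contains `(−∞,0]` — the operators `A = −e^{iπ/3}Δ` and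
`B = e^{iπ/3}I` satisfy: the numerical range of `A` lies in the sector of angle `π/3`,
`B` is bounded invertible with the numerical range of `B⁻¹` in the sector of angle `π/3`,
but `−BA = e^{2iπ/3}Δ` does not generate a `C₀`-semigroup on `H`. -/
theorem no_C0_semigroup_counterexample
    {H : Type*} [NormedAddCommGroup H] [InnerProductSpace ℂ H] [CompleteSpace H]
    (D : Submodule ℂ H) (Δ : D →ₗ[ℂ] H)
    (hsym : ∀ x : D, ((inner ℂ (x : H) (Δ x) : ℂ)).im = 0)
    (hneg : ∀ x : D, (x : H) ≠ 0 → ((inner ℂ (x : H) (Δ x) : ℂ)).re < 0)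
    (happrox : ∀ μ : ℝ, μ ≤ 0 → ∀ ε > 0, ∃ x : D, ‖(x : H)‖ = 1 ∧
      ‖Δ x - (μ : ℂ) • (x : H)‖ < ε) :
    ∃ (A : D →ₗ[ℂ] H) (B Binv : H →L[ℂ] H),
      (∀ x : D, A x = -(Complex.exp (π * I / 3)) • Δ x) ∧
      B = Complex.exp (π * I / 3) • ContinuousLinearMap.id ℂ H ∧
      B.comp Binv = ContinuousLinearMap.id ℂ H ∧
      Binv.comp B = ContinuousLinearMap.id ℂ H ∧
      (∀ x : D, (x : H) ≠ 0 → (inner ℂ (x : H) (A x) : ℂ) ∈ Sector (π / 3)) ∧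
      (∀ u : H, u ≠ 0 → (inner ℂ u (Binv u) : ℂ) ∈ Sector (π / 3)) ∧
      ¬ ∃ T : ℝ → H →L[ℂ] H, IsC0Semigroup T ∧
          ∀ x : D, HasDerivWithinAt (fun t => T t (x : H))
            (Complex.exp (2 * π * I / 3) • Δ x) (Set.Ici 0) 0 := by
  have hπ := Real.pi_pos
  set c : ℂ := Complex.exp (↑π * I / 3) with hc
  have hc0 : c ≠ 0 := Complex.exp_ne_zero _
  have hcarg : c.arg = π / 3 := by
    have h1 : (↑π * I / 3 : ℂ) = ((π/3 : ℝ) : ℂ) * I := by push_cast; ring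
    rw [hc, h1, Complex.exp_mul_I]
    exact Complex.arg_cos_add_sin_mul_I (Set.mem_Ioc.mpr ⟨by linarith, by linarith⟩)
  have hcinv : c⁻¹ = Complex.exp (((-(π/3) : ℝ) : ℂ) * I) := by
    rw [hc, ← Complex.exp_neg]
    congr 1
    push_cast; ring
  have hcinvarg : (c⁻¹).arg = -(π/3) := by
    rw [hcinv, Complex.exp_mul_I]
    exact Complex.arg_cos_add_sin_mul_I (Set.mem_Ioc.mpr ⟨by linarith, by linarith⟩)
  refine ⟨(-c) • Δ, c • ContinuousLinearMap.id ℂ H, c⁻¹ • ContinuousLinearMap.id ℂ H,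
    fun x => rfl, rfl, ?_, ?_, ?_, ?_, ?_⟩
  · ext u; simp [smul_smul, mul_inv_cancel₀ hc0, inv_mul_cancel₀ hc0]
  · ext u; simp [smul_smul, mul_inv_cancel₀ hc0, inv_mul_cancel₀ hc0]
  · -- numerical range of A
    intro x hx
    have hw : (inner ℂ (x : H) (Δ x) : ℂ) = (((inner ℂ (x : H) (Δ x) : ℂ)).re : ℝ) := by
      apply Complex.ext <;> simp [hsym x]
    set r : ℝ := ((inner ℂ (x : H) (Δ x) : ℂ)).re with hr
    have hrneg : r < 0 := hneg x hx
    have hz : (inner ℂ (x : H) (((-c) • Δ) x) : ℂ) = ((-r : ℝ) : ℂ) * c := by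
      have h5 : ((-c) • Δ) x = (-c) • Δ x := rfl
      rw [h5, inner_smul_right, hw]
      push_cast; ring
    refine ⟨by rw [hz]; exact mul_ne_zero (by exact_mod_cast (by linarith : (-r:ℝ) ≠ 0)) hc0, ?_⟩
    rw [hz, Complex.arg_real_mul c (by linarith : (0:ℝ) < -r), hcarg]
    rw [abs_of_pos (by linarith)]
  · -- numerical range of B⁻¹
    intro u hu
    have hz : (inner ℂ u ((c⁻¹ • ContinuousLinearMap.id ℂ H) u) : ℂ)
        = ((‖u‖^2 : ℝ) : ℂ) * c⁻¹ := by
      have h5 : (c⁻¹ • ContinuousLinearMap.id ℂ H) u = c⁻¹ • u := rfl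
      rw [h5, inner_smul_right, inner_self_eq_norm_sq_to_K]
      push_cast
      ring_nf
      norm_cast
    have hn : (0:ℝ) < ‖u‖^2 := pow_pos (norm_pos_iff.mpr hu) 2
    refine ⟨by rw [hz]; exact mul_ne_zero (by exact_mod_cast hn.ne') (inv_ne_zero hc0), ?_⟩
    rw [hz, Complex.arg_real_mul _ hn, hcinvarg, abs_neg, abs_of_pos (by linarith)]
  · -- non-generation
    rintro ⟨T, hTsg, hder⟩
    obtain ⟨hT0, hTadd, hTc⟩ := hTsg
    obtain ⟨δ, hδ, M, hM1, hbound⟩ := c0_local_bound T ⟨hT0, hTadd, hTc⟩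
    have hM0 : (0:ℝ) < M := by linarith
    set ω : ℂ := Complex.exp (2 * ↑π * I / 3) with hω
    have hωeq : ω = Complex.exp (((2*π/3 : ℝ) : ℂ) * I) := by
      rw [hω]; congr 1; push_cast; ring
    have hωre : ω.re = -(1/2) := by
      rw [hωeq, Complex.exp_ofReal_mul_I_re,
        show 2*π/3 = π - π/3 by ring, Real.cos_pi_sub, Real.cos_pi_div_three]
    have hωnorm : ‖ω‖ = 1 := by
      rw [hωeq, Complex.norm_exp_ofReal_mul_I]
    set μ : ℝ := -(2/δ) * (Real.log (4*M) + 1) with hμdef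
    have hlog : 0 ≤ Real.log (4*M) := Real.log_nonneg (by linarith)
    have hμ : μ ≤ 0 := by
      rw [hμdef]
      have h6 : 0 < 2/δ := by positivity
      nlinarith
    set ε : ℝ := 1/(2*M*δ) with hεdef
    have hε : 0 < ε := by positivity
    obtain ⟨x, hx1, hxe⟩ := happrox μ hμ ε hε
    set e : H := Δ x - (μ : ℂ) • (x : H) with he
    set lam : ℂ := (μ:ℂ) * ω with hlam
    have hlamre : lam.re = -μ/2 := by
      rw [hlam]
      simp only [Complex.mul_re, Complex.ofReal_re, Complex.ofReal_im, hωre]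
      ring
    have hlamre0 : 0 ≤ lam.re := by rw [hlamre]; linarith
    -- key estimate for continuity
    have hest : ∀ s t : ℝ, 0 ≤ s → s ≤ t → t ≤ δ →
        ‖T t (x:H) - T s (x:H)‖ ≤ M * ‖T (t - s) (x:H) - (x:H)‖ := by
      intro s t hs hst htδ
      have h1 : T t (x:H) = T s (T (t-s) (x:H)) := by
        conv_lhs => rw [show t = s + (t - s) by ring]
        rw [hTadd s (t-s) hs (by linarith)]
        rfl
      have h2 : T t (x:H) - T s (x:H) = T s (T (t-s) (x:H) - (x:H)) := by
        rw [h1, map_sub]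
      rw [h2]
      calc ‖T s (T (t-s) (x:H) - (x:H))‖ ≤ ‖T s‖ * ‖T (t-s) (x:H) - (x:H)‖ :=
            (T s).le_opNorm _
        _ ≤ M * ‖T (t-s) (x:H) - (x:H)‖ :=
            mul_le_mul_of_nonneg_right (hbound s ⟨hs, by linarith⟩) (norm_nonneg _)
    -- continuity of t ↦ T t x on [0, δ]
    have hu_cont : ContinuousOn (fun t => T t (x:H)) (Set.Icc 0 δ) := by
      intro s hs
      have key : Filter.Tendsto (fun t => ‖T t (x:H) - T s (x:H)‖)
          (nhdsWithin s (Set.Icc 0 δ)) (nhds 0) := ?_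
      · exact tendsto_iff_norm_sub_tendsto_zero.mpr key
      have habs : Filter.Tendsto (fun t : ℝ => |t - s|) (nhdsWithin s (Set.Icc 0 δ))
          (nhdsWithin 0 (Set.Ici 0)) := by
        apply tendsto_nhdsWithin_of_tendsto_nhds_of_eventually_within
        · have h7 := (continuous_abs.comp (continuous_sub_right s)).tendsto' s 0 (by simp)
          exact (h7.mono_left nhdsWithin_le_nhds :)
        · exact Filter.Eventually.of_forall fun t => Set.mem_Ici.mpr (abs_nonneg _)
      have hG : Filter.Tendsto (fun t : ℝ => M * ‖T (|t - s|) (x:H) - (x:H)‖)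
          (nhdsWithin s (Set.Icc 0 δ)) (nhds 0) := by
        have h2 : Filter.Tendsto (fun r : ℝ => M * ‖T r (x:H) - (x:H)‖)
            (nhdsWithin 0 (Set.Ici 0)) (nhds 0) := by
          have h9 : Filter.Tendsto (fun r : ℝ => M * ‖T r (x:H) - (x:H)‖)
              (nhdsWithin 0 (Set.Ici 0)) (nhds (M * ‖(x:H) - (x:H)‖)) :=
            (((hTc (x:H)).sub tendsto_const_nhds).norm).const_mul M
          simpa using h9
        exact h2.comp habs
      apply squeeze_zero' (Filter.Eventually.of_forall fun t => norm_nonneg _) _ hG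
      filter_upwards [self_mem_nhdsWithin] with t ht
      rcases le_total s t with h | h
      · rw [_root_.abs_of_nonneg (by linarith : (0:ℝ) ≤ t - s)]
        exact hest s t hs.1 h ht.2
      · rw [_root_.abs_of_nonpos (by linarith : t - s ≤ 0), show -(t-s) = s - t by ring,
          ← neg_sub (T s (x:H)) (T t (x:H)), norm_neg]
        exact hest t s ht.1 h hs.2
    -- right derivative of t ↦ T t x
    have hd : ∀ t ∈ Set.Ico 0 δ, HasDerivWithinAt (fun r => T r (x:H))
        (T t (ω • Δ x)) (Set.Ici t) t := by
      intro t ht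
      have h1 : HasDerivWithinAt ((T t) ∘ (fun r => T r (x:H))) (T t (ω • Δ x))
          (Set.Ici 0) 0 := by
        exact ((T t).restrictScalars ℝ).hasFDerivAt.comp_hasDerivWithinAt 0 (hder x)
      have h2 : HasDerivWithinAt (fun r : ℝ => r - t) 1 (Set.Ici t) t := by
        simpa using (hasDerivWithinAt_id (x := t) (s := Set.Ici t)).sub_const t
      have hmap : Set.MapsTo (fun r : ℝ => r - t) (Set.Ici t) (Set.Ici 0) := by
        intro r hr
        simp only [Set.mem_Ici] at hr ⊢
        linarith
      have h3 : HasDerivWithinAt (((T t) ∘ (fun r => T r (x:H))) ∘ (fun r : ℝ => r - t))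
          ((1:ℝ) • T t (ω • Δ x)) (Set.Ici t) t :=
        h1.scomp_of_eq t h2 hmap (sub_self t).symm
      rw [one_smul] at h3
      refine h3.congr (fun r hr => ?_) ?_
      · simp only [Set.mem_Ici] at hr
        simp only [Function.comp]
        rw [← ContinuousLinearMap.comp_apply, ← hTadd t (r-t) ht.1 (by linarith),
          show t + (r - t) = r by ring]
      · simp only [Function.comp, sub_self, hT0, ContinuousLinearMap.id_apply]
    -- the rescaled function g
    set g : ℝ → H := fun s => Complex.exp (-(lam * ↑s)) • T s (x:H) with hg
    have hgd : ∀ t ∈ Set.Ico 0 δ,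
        HasDerivWithinAt g (Complex.exp (-(lam * ↑t)) • (T t (ω • e))) (Set.Ici t) t := by
      intro t ht
      have hc1 : HasDerivAt (fun s : ℝ => -(lam * ↑s)) (-lam) t := by
        have hid : HasDerivAt (fun s : ℝ => (s:ℂ)) 1 t := by
          simpa using (hasDerivAt_id t).ofReal_comp
        have := (hid.const_mul lam).neg
        simp only [mul_one] at this
        exact this
      have hc2 : HasDerivWithinAt (fun s : ℝ => Complex.exp (-(lam * ↑s)))
          (Complex.exp (-(lam * ↑t)) * (-lam)) (Set.Ici t) t := (hc1.cexp).hasDerivWithinAt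
      have hsm := hc2.smul (hd t ht)
      have hΔ : ω • Δ x = lam • (x:H) + ω • e := by
        rw [he, smul_sub, smul_smul, hlam, mul_comm]
        abel
      have hTt : T t (ω • Δ x) = lam • T t (x:H) + T t (ω • e) := by
        rw [hΔ, map_add, map_smul]
      have hder_eq : Complex.exp (-(lam * ↑t)) • T t (ω • Δ x)
          + (Complex.exp (-(lam * ↑t)) * (-lam)) • T t (x:H)
          = Complex.exp (-(lam * ↑t)) • (T t (ω • e)) := by
        rw [hTt, smul_add, smul_smul]
        module
      exact hder_eq ▸ hsm
    have hg_cont : ContinuousOn g (Set.Icc 0 δ) := by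
      apply ContinuousOn.smul _ hu_cont
      apply Continuous.continuousOn
      exact Complex.continuous_exp.comp ((continuous_const.mul Complex.continuous_ofReal).neg)
    have hbnd : ∀ t ∈ Set.Ico 0 δ,
        ‖Complex.exp (-(lam * ↑t)) • (T t (ω • e))‖ ≤ M * ε := by
      intro t ht
      rw [norm_smul]
      have h1 : ‖Complex.exp (-(lam * ↑t))‖ ≤ 1 := by
        rw [Complex.norm_exp]
        have h10 : (-(lam * ↑t)).re = -(lam.re * t) := by
          simp [Complex.mul_re]
        rw [h10]
        exact Real.exp_le_one_iff.mpr (by nlinarith [ht.1])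
      have h2 : ‖T t (ω • e)‖ ≤ M * ε := by
        calc ‖T t (ω • e)‖ ≤ ‖T t‖ * ‖ω • e‖ := (T t).le_opNorm _
          _ ≤ M * ε := by
              apply mul_le_mul (hbound t ⟨ht.1, ht.2.le⟩) _ (norm_nonneg _) hM0.le
              rw [norm_smul, hωnorm, one_mul]
              exact hxe.le
      calc ‖Complex.exp (-(lam * ↑t))‖ * ‖T t (ω • e)‖ ≤ 1 * (M * ε) :=
            mul_le_mul h1 h2 (norm_nonneg _) one_pos.le
        _ = M * ε := one_mul _
    have hmvt := norm_image_sub_le_of_norm_deriv_right_le_segment hg_cont hgd hbnd δ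
      ⟨hδ.le, le_refl δ⟩
    have hg0 : g 0 = (x:H) := by
      simp [hg, hT0]
    rw [hg0, sub_zero] at hmvt
    have hεδ : M * ε * δ = 1/2 := by
      rw [hεdef]; field_simp
    rw [hεδ] at hmvt
    have hglb : (1:ℝ)/2 ≤ ‖g δ‖ := by
      have h11 := norm_sub_norm_le (x:H) (g δ)
      rw [hx1, norm_sub_rev] at h11
      linarith
    have hgub : ‖g δ‖ ≤ Real.exp (-(lam.re * δ)) * M := by
      rw [hg]
      simp only
      rw [norm_smul, Complex.norm_exp]
      have h12 : (-(lam * ↑δ)).re = -(lam.re * δ) := by simp [Complex.mul_re]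
      rw [h12]
      apply mul_le_mul_of_nonneg_left _ (Real.exp_pos _).le
      calc ‖T δ (x:H)‖ ≤ ‖T δ‖ * ‖(x:H)‖ := (T δ).le_opNorm _
        _ ≤ M := by rw [hx1, mul_one]; exact hbound δ ⟨hδ.le, le_refl δ⟩
    have hexpval : Real.exp (lam.re * δ) = 4 * M * Real.exp 1 := by
      have hδ0 : δ ≠ 0 := hδ.ne'
      have h13 : lam.re * δ = Real.log (4*M) + 1 := by
        rw [hlamre, hμdef]; field_simp
      rw [h13, Real.exp_add, Real.exp_log (by linarith)]
    have hsmall : Real.exp (-(lam.re * δ)) * M < 1/2 := by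
      rw [Real.exp_neg, hexpval]
      have h2 : (2:ℝ) ≤ Real.exp 1 := by have := Real.add_one_le_exp 1; linarith
      have hpos : 0 < 4*M*Real.exp 1 := by positivity
      rw [inv_mul_eq_div, div_lt_iff₀ hpos]
      nlinarith
    linarith
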